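/- Let R be a weakly 2-primal ring, i.e., the set Nil(R) of nilpotent elements of R is a two-sided ideal and every non-unital subring generated by a finite subset of Nil(R) is nilpotent. If R is strongly unit nil-clean, then the full matrix ring M_n(R) is strongly unit nil-clean for every n ≥ 1. -/

import Mathlib

/-- An element `x` of a ring is *strongly nil-clean* if `x = e + b` where `e` is an
idempotent, `b` is nilpotent, and `e` and `b` commute. -/
def IsStronglyNilClean {R : Type*} [Ring R] (x : R) : Prop :=
  ∃ e b : R, IsIdempotentElem e ∧ IsNilpotent b ∧ e * b = b * e ∧ x = e + b

/-- A ring `R` is *strongly unit nil-clean* if for every `x : R` there is a unit `u`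
such that `u * x` is strongly nil-clean. -/
def StronglyUnitNilClean (R : Type*) [Ring R] : Prop :=
  ∀ x : R, ∃ u : Rˣ, IsStronglyNilClean ((u : R) * x)

/-- A ring `R` is *unit-regular* if every `a : R` satisfies `a = a * u * a` for some unit `u`. -/
def UnitRegular (R : Type*) [Ring R] : Prop :=
  ∀ a : R, ∃ u : Rˣ, a = a * (u : R) * a

/-- A group is *locally finite* if every finitely generated subgroup is finite. -/
def LocallyFiniteGroup (G : Type*) [Group G] : Prop :=
  ∀ H : Subgroup G, H.FG → (H : Set G).Finite

/-- A subset `T` of a ring is *nilpotent* if there is `n ≥ 1` such that every product of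
`n` elements of `T` is zero. -/
def IsNilpotentSubset {R : Type*} [Ring R] (T : Set R) : Prop :=
  ∃ n : ℕ, 0 < n ∧ ∀ l : List R, (∀ a ∈ l, a ∈ T) → l.length = n → l.prod = 0

/-- A subset `S` of a ring is *locally nilpotent* if the non-unital subring generated by
any finite subset of `S` is nilpotent. -/
def IsLocallyNilpotentSet {R : Type*} [Ring R] (S : Set R) : Prop :=
  ∀ F : Finset R, (F : Set R) ⊆ S →
    IsNilpotentSubset ((NonUnitalSubring.closure (F : Set R) : Set R))

/-- A ring is *NI* if the set of nilpotent elements forms a two-sided ideal. -/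
def IsNIRing (R : Type*) [Ring R] : Prop :=
  ∃ I : TwoSidedIdeal R, ∀ x : R, x ∈ I ↔ IsNilpotent x

/-- A ring is *weakly 2-primal* if its set of nilpotent elements is a two-sided ideal
which is moreover locally nilpotent. -/
def Weakly2Primal (R : Type*) [Ring R] : Prop :=
  IsNIRing R ∧ IsLocallyNilpotentSet {x : R | IsNilpotent x}


open Polynomial in
private lemma aux_comm_poly {R : Type*} [Ring R] (x : R) (p q : Polynomial ℤ) :
    Commute (aeval x p) (aeval x q) := by
  unfold Commute SemiconjBy
  rw [← map_mul, ← map_mul, mul_comm]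

open Polynomial in
private lemma diesl_aux {R : Type*} [Ring R] :
    ∀ m : ℕ, ∀ x : R, (x - x ^ 2) ^ m = 0 →
      ∃ e : R, IsIdempotentElem e ∧ (∃ p : Polynomial ℤ, e = aeval x p) ∧ IsNilpotent (x - e) := by
  intro m
  induction m using Nat.strong_induction_on with
  | _ m IH =>
  intro x hx
  rcases Nat.lt_or_ge m 2 with hm | hm
  · interval_cases m
    · simp only [pow_zero] at hx
      have : Subsingleton R := subsingleton_of_zero_eq_one hx.symm
      exact ⟨0, by simp [IsIdempotentElem], ⟨0, by simp⟩, ⟨1, Subsingleton.elim _ _⟩⟩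
    · simp only [pow_one, sub_eq_zero] at hx
      exact ⟨x, by rwa [IsIdempotentElem, ← sq, eq_comm], ⟨X, by simp⟩, ⟨1, by simp⟩⟩
  · set y : R := 3 * x ^ 2 - 2 * x ^ 3 with hy
    set s : Polynomial ℤ := X - X ^ 2 with hs
    have hsx : aeval x s = x - x ^ 2 := by simp [hs]
    have hy' : y = aeval x (3 * X ^ 2 - 2 * X ^ 3 : Polynomial ℤ) := by simp [hy, map_ofNat]
    have key : y - y ^ 2 = aeval x (s ^ 2 * ((3 - 2 * X) * (1 + 2 * X))) := by
      rw [hy']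
      rw [← map_pow, ← map_sub]
      congr 1
      rw [hs]; ring
    have hkey : (y - y ^ 2) ^ (m - 1) = 0 := by
      rw [key, ← map_pow]
      have h2 : (s ^ 2 * ((3 - 2*X) * (1 + 2*X))) ^ (m - 1)
          = s ^ m * (s ^ (m - 2) * ((3 - 2*X) * (1 + 2*X)) ^ (m-1)) := by
        rw [mul_pow, ← pow_mul, (by omega : 2 * (m - 1) = m + (m - 2)), pow_add]
        ring
      rw [h2, map_mul, map_pow, hsx, hx, zero_mul]
    obtain ⟨e, he, ⟨p, hp⟩, hnil⟩ := IH (m - 1) (by omega) y hkey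
    have hq : (aeval x) (3 * X ^ 2 - 2 * X ^ 3 : Polynomial ℤ) = y := hy'.symm
    refine ⟨e, he, ⟨p.comp (3 * X ^ 2 - 2 * X ^ 3 : Polynomial ℤ), by rw [aeval_comp, hq, hp]⟩, ?_⟩
    have h1 : IsNilpotent (x - y) := by
      refine ⟨m, ?_⟩
      have hq0 : (aeval x) (3 * X ^ 2 - 2 * X ^ 3 : Polynomial ℤ) = y := hy'.symm
      have hxy : x - y = aeval x (s * (1 - 2 * X)) := by
        have h0 : (X - (3 * X ^ 2 - 2 * X ^ 3) : Polynomial ℤ) = s * (1 - 2 * X) := by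
          rw [hs]; ring
        rw [← h0, map_sub, aeval_X, hq0]
      rw [hxy, ← map_pow, mul_pow, map_mul, map_pow, hsx, hx, zero_mul]
    have hcomm : Commute (x - y) (y - e) := by
      have ha : x - y = aeval x (X - (3 * X ^ 2 - 2 * X ^ 3) : Polynomial ℤ) := by
        rw [map_sub, aeval_X, hq]
      have hb : y - e = aeval x ((3 * X ^ 2 - 2 * X ^ 3 : Polynomial ℤ)
          - p.comp (3 * X ^ 2 - 2 * X ^ 3 : Polynomial ℤ)) := by
        rw [map_sub, hq, aeval_comp, hq, ← hp]
      rw [ha, hb]; exact aux_comm_poly x _ _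
    have hxe : x - e = (x - y) + (y - e) := by abel
    rw [hxe]
    exact hcomm.isNilpotent_add h1 hnil

theorem isStronglyNilClean_of_nilpotent {R : Type*} [Ring R] {x : R}
    (h : IsNilpotent (x - x ^ 2)) :
    ∃ e b : R, IsIdempotentElem e ∧ IsNilpotent b ∧ e * b = b * e ∧ x = e + b := by
  obtain ⟨m, hm⟩ := h
  obtain ⟨e, he, ⟨p, hp⟩, hnil⟩ := diesl_aux m x hm
  refine ⟨e, x - e, he, hnil, ?_, by abel⟩
  have hex : e * x = x * e := by
    rw [hp]
    simpa using (aux_comm_poly x p Polynomial.X).eq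
  rw [mul_sub, sub_mul, hex]

-- idempotents are central in a "reduced" ring
private lemma idem_central {S : Type*} [Ring S] (hred : ∀ x : S, x * x = 0 → x = 0)
    {e : S} (he : IsIdempotentElem e) (y : S) : e * y = y * e := by
  have he'' : ∀ z : S, e * (e * z) = e * z := fun z => by
    rw [← mul_assoc, (he : e * e = e)]
  have h1 : e * y - e * y * e = 0 := by
    apply hred
    simp only [mul_sub, sub_mul, mul_assoc, he'']
    abel
  have h2 : y * e - e * y * e = 0 := by
    apply hred
    simp only [mul_sub, sub_mul, mul_assoc, he'']
    abel
  rw [sub_eq_zero] at h1 h2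
  rw [h1, h2]

-- lifting units along a surjection with nil kernel
private lemma unit_lift {A B : Type*} [Ring A] [Ring B] (f : A →+* B)
    (hsurj : Function.Surjective f) (hnil : ∀ a : A, f a = 0 → IsNilpotent a) (v : Bˣ) :
    ∃ u : Aˣ, f u = v := by
  obtain ⟨x, hx⟩ := hsurj (v : B)
  obtain ⟨y, hy⟩ := hsurj ((v⁻¹ : Bˣ) : B)
  have h1 : IsNilpotent (x * y - 1) := by
    apply hnil; rw [map_sub, map_mul, hx, hy, map_one]; simp
  have h2 : IsNilpotent (y * x - 1) := by
    apply hnil; rw [map_sub, map_mul, hx, hy, map_one]; simp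
  have hu1 : IsUnit (x * y) := by
    have : x * y = 1 + (x * y - 1) := by abel
    rw [this]
    exact h1.isUnit_one_add
  have hu2 : IsUnit (y * x) := by
    have : y * x = 1 + (y * x - 1) := by abel
    rw [this]
    exact h2.isUnit_one_add
  obtain ⟨w1, hw1⟩ := hu1
  obtain ⟨w2, hw2⟩ := hu2
  set r : A := y * (w1⁻¹ : A ˣ) with hr
  set l : A := (w2⁻¹ : Aˣ) * y with hl
  have hxr : x * r = 1 := by
    rw [hr, ← mul_assoc, ← hw1]; exact w1.mul_inv
  have hlx : l * x = 1 := by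
    rw [hl, mul_assoc, ← hw2]; exact w2.inv_mul
  have hrl : r = l := by
    calc r = 1 * r := (one_mul r).symm
      _ = l * x * r := by rw [hlx]
      _ = l * (x * r) := by rw [mul_assoc]
      _ = l := by rw [hxr, mul_one]
  refine ⟨⟨x, r, hxr, by rw [hrl]; exact hlx⟩, hx⟩

private lemma matrix_nilpotent {R : Type*} [Ring R]
    (hLN : IsLocallyNilpotentSet {x : R | IsNilpotent x})
    {n : ℕ} (A : Matrix (Fin n) (Fin n) R) (hA : ∀ i j, IsNilpotent (A i j)) :
    IsNilpotent A := by
  classical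
  set F : Finset R := Finset.image (fun p : Fin n × Fin n => A p.1 p.2) Finset.univ with hF
  have hFsub : (F : Set R) ⊆ {x : R | IsNilpotent x} := by
    intro x hx
    simp only [hF, Finset.coe_image, Set.mem_image] at hx
    obtain ⟨p, _, rfl⟩ := hx
    exact hA p.1 p.2
  obtain ⟨m, hm0, hm⟩ := hLN F hFsub
  set T : Set R := (NonUnitalSubring.closure (F : Set R) : Set R) with hT
  have hAT : ∀ i j, A i j ∈ T := by
    intro i j
    apply NonUnitalSubring.subset_closure
    simp only [hF, Finset.coe_image, Set.mem_image]
    exact ⟨(i, j), by simp, rfl⟩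
  -- additive subgroups of k-fold products
  set G : ℕ → AddSubgroup R := fun k =>
    AddSubgroup.closure {x : R | ∃ l : List R, (∀ a ∈ l, a ∈ T) ∧ l.length = k ∧ l.prod = x}
    with hG
  have hmul : ∀ k (x y : R), x ∈ G k → y ∈ T → x * y ∈ G (k + 1) := by
    intro k x y hx hy
    induction hx using AddSubgroup.closure_induction with
    | mem z hz =>
      obtain ⟨l, hl1, hl2, hl3⟩ := hz
      apply AddSubgroup.subset_closure
      refine ⟨l ++ [y], ?_, by simp [hl2], by simp [hl3]⟩
      intro a ha
      rcases List.mem_append.1 ha with h | h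
      · exact hl1 a h
      · simp at h; subst h; exact hy
    | zero => simpa using (G (k+1)).zero_mem
    | add a b _ _ ha hb => rw [add_mul]; exact (G (k+1)).add_mem ha hb
    | neg a _ ha => rw [neg_mul]; exact (G (k+1)).neg_mem ha
  have hpow : ∀ k i j, (A ^ (k + 1)) i j ∈ G (k + 1) := by
    intro k
    induction k with
    | zero =>
      intro i j
      rw [pow_one]
      exact AddSubgroup.subset_closure ⟨[A i j], by simpa using hAT i j, rfl, by simp⟩
    | succ k IH =>
      intro i j
      rw [pow_succ, Matrix.mul_apply]
      exact AddSubgroup.sum_mem _ fun t _ => hmul (k + 1) _ _ (IH i t) (hAT t j)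
  have hGm : G m = ⊥ := by
    rw [hG, eq_bot_iff]
    apply (AddSubgroup.closure_le _).2
    rintro x ⟨l, hl1, hl2, rfl⟩
    simp only [SetLike.mem_coe, AddSubgroup.mem_bot]
    exact hm l hl1 hl2
  refine ⟨m, ?_⟩
  obtain ⟨k, rfl⟩ := Nat.exists_eq_succ_of_ne_zero hm0.ne'
  ext i j
  have := hpow k i j
  rw [hGm] at this
  simpa using this

section Helpers
variable {S : Type*} [Ring S] {ι : Type*} [Fintype ι] [DecidableEq ι]

private def tv (i j : ι) (c : S) : Matrix ι ι S := 1 + Matrix.single i j c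

private lemma tv_mul_apply (i j : ι) (c : S) (M : Matrix ι ι S) (a b : ι) :
    (tv i j c * M) a b = M a b + if a = i then c * M j b else 0 := by
  rw [tv, add_mul, one_mul, Matrix.add_apply]
  congr 1
  rcases eq_or_ne a i with rfl | h
  · simp [Matrix.single_mul_apply_same]
  · simp [h]

private lemma mul_tv_apply (i j : ι) (c : S) (M : Matrix ι ι S) (a b : ι) :
    (M * tv i j c) a b = M a b + if b = j then M a i * c else 0 := by
  rw [tv, mul_add, mul_one, Matrix.add_apply]
  congr 1
  rcases eq_or_ne b j with rfl | h
  · simp [Matrix.mul_single_apply_same]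
  · simp [h]

private lemma tv_mulVec (i j : ι) (c : S) (v : ι → S) (a : ι) :
    (tv i j c).mulVec v a = v a + if a = i then c * v j else 0 := by
  rw [tv, Matrix.add_mulVec, Matrix.one_mulVec, Pi.add_apply,
    Matrix.single_mulVec]
  congr 1
  rcases eq_or_ne a i with rfl | h
  · simp
  · simp [Function.update, h.symm]

private lemma tv_mul_tv {i j : ι} (h : i ≠ j) (c d : S) :
    (tv i j c : Matrix ι ι S) * tv i j d = tv i j (c + d) := by
  rw [tv, tv, tv, add_mul, one_mul, mul_add, mul_one,
    Matrix.single_mul_single_of_ne (h := Ne.symm h), Matrix.single_add]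
  abel

private def tvUnit (i j : ι) (h : i ≠ j) (c : S) : (Matrix ι ι S)ˣ :=
  ⟨tv i j c, tv i j (-c),
    by rw [tv_mul_tv h, add_neg_cancel]; simp [tv],
    by rw [tv_mul_tv h, neg_add_cancel]; simp [tv]⟩

private def dUnit (i : ι) (u : Sˣ) : (Matrix ι ι S)ˣ :=
  ⟨Matrix.diagonal (fun a => if a = i then (u : S) else 1),
   Matrix.diagonal (fun a => if a = i then ((u⁻¹ : Sˣ) : S) else 1),
   by
     rw [Matrix.diagonal_mul_diagonal]
     have h0 : (fun a => (if a = i then (u : S) else 1) *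
         (if a = i then ((u⁻¹ : Sˣ) : S) else 1)) = fun _ => (1 : S) := by
       funext a
       rcases eq_or_ne a i with rfl | hne
       · simp
       · simp [hne]
     rw [h0, Matrix.diagonal_one],
   by
     rw [Matrix.diagonal_mul_diagonal]
     have h0 : (fun a => (if a = i then ((u⁻¹ : Sˣ) : S) else 1) *
         (if a = i then (u : S) else 1)) = fun _ => (1 : S) := by
       funext a
       rcases eq_or_ne a i with rfl | hne
       · simp
       · simp [hne]
     rw [h0, Matrix.diagonal_one]⟩

private lemma dUnit_mulVec (i : ι) (u : Sˣ) (v : ι → S) (a : ι) :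
    (dUnit i u).val.mulVec v a
      = if a = i then (u : S) * v a else v a := by
  rw [dUnit]
  dsimp only
  rw [Matrix.mulVec_diagonal]
  rcases eq_or_ne a i with rfl | hne
  · simp
  · simp [hne]

private lemma tvUnit_coe (i j : ι) (h : i ≠ j) (c : S) :
    (tvUnit i j h c).val = tv i j c := rfl

end Helpers

section ColClear
variable {S : Type*} [Ring S] {ι : Type*} [Fintype ι] [DecidableEq ι]

private lemma col_clear (hred : ∀ x : S, x * x = 0 → x = 0)
    (hS : ∀ a : S, ∃ u : Sˣ, IsIdempotentElem ((u : S) * a)) (i₀ : ι) :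
    ∀ T : Finset ι, i₀ ∉ T → ∀ v : ι → S, (∀ i, i ≠ i₀ → i ∉ T → v i = 0) →
    ∃ (P : (Matrix ι ι S)ˣ) (e : S), IsIdempotentElem e ∧
      ∀ i, P.val.mulVec v i = if i = i₀ then e else 0 := by
  intro T
  induction T using Finset.induction_on with
  | empty =>
    intro _ v hv
    obtain ⟨u, hu⟩ := hS (v i₀)
    refine ⟨dUnit i₀ u, (u : S) * v i₀, hu, fun i => ?_⟩
    rw [dUnit_mulVec]
    rcases eq_or_ne i i₀ with h | h
    · rw [if_pos h, if_pos h, h]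
    · rw [if_neg h, if_neg h, hv i h (Finset.notMem_empty i)]
  | @insert i₁ T hi₁ IH =>
    intro hT v hv
    have hne : i₁ ≠ i₀ := by rintro rfl; exact hT (Finset.mem_insert_self _ _)
    have hT0 : i₀ ∉ T := fun h => hT (Finset.mem_insert_of_mem h)
    obtain ⟨u₁, hu₁⟩ := hS (v i₀)
    set e₁ : S := (u₁ : S) * v i₀ with he₁def
    set v₁ : ι → S := (dUnit i₀ u₁).val.mulVec v with hv₁def
    have hv₁ : ∀ k, v₁ k = if k = i₀ then e₁ else v k := by
      intro k
      rw [hv₁def, dUnit_mulVec]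
      rcases eq_or_ne k i₀ with h | h
      · rw [if_pos h, if_pos h, h]
      · rw [if_neg h, if_neg h]
    set b' : S := v i₁ - v i₁ * e₁ with hb'def
    set v₂ : ι → S := (tvUnit i₁ i₀ hne (-(v i₁))).val.mulVec v₁ with hv₂def
    have hv₂ : ∀ k, v₂ k = if k = i₁ then b' else v₁ k := by
      intro k
      rw [hv₂def, tvUnit_coe, tv_mulVec]
      rcases eq_or_ne k i₁ with h | h
      · rw [if_pos h, if_pos h, h]
        have h10 : v₁ i₀ = e₁ := by rw [hv₁ i₀, if_pos rfl]
        have h11 : v₁ i₁ = v i₁ := by rw [hv₁ i₁, if_neg hne]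
        rw [h10, h11, hb'def, neg_mul]
        abel
      · rw [if_neg h, if_neg h, add_zero]
    obtain ⟨u₂, hu₂⟩ := hS b'
    set e₂ : S := (u₂ : S) * b' with he₂def
    have he₂e₁ : e₂ * e₁ = 0 := by
      rw [he₂def, hb'def, mul_assoc, sub_mul, mul_assoc, (hu₁ : e₁ * e₁ = e₁)]
      simp
    have he₁e₂ : e₁ * e₂ = 0 := by
      rw [← idem_central hred hu₂ e₁, he₂e₁]
    set v₃ : ι → S := (dUnit i₁ u₂).val.mulVec v₂ with hv₃def
    have hv₃ : ∀ k, v₃ k = if k = i₁ then e₂ else v₂ k := by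
      intro k
      rw [hv₃def, dUnit_mulVec]
      rcases eq_or_ne k i₁ with h | h
      · rw [if_pos h, if_pos h, h, he₂def]
        have : v₂ i₁ = b' := by rw [hv₂ i₁, if_pos rfl]
        rw [this]
      · rw [if_neg h, if_neg h]
    set v₄ : ι → S := (tvUnit i₀ i₁ (Ne.symm hne) (1 : S)).val.mulVec v₃ with hv₄def
    have hv₄ : ∀ k, v₄ k = if k = i₀ then e₁ + e₂ else v₃ k := by
      intro k
      rw [hv₄def, tvUnit_coe, tv_mulVec]
      rcases eq_or_ne k i₀ with h | h
      · rw [if_pos h, if_pos h, h, one_mul]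
        have h30 : v₃ i₀ = e₁ := by
          rw [hv₃ i₀, if_neg (Ne.symm hne), hv₂ i₀, if_neg (Ne.symm hne), hv₁ i₀, if_pos rfl]
        have h31 : v₃ i₁ = e₂ := by rw [hv₃ i₁, if_pos rfl]
        rw [h30, h31]
      · rw [if_neg h, if_neg h, add_zero]
    set v₅ : ι → S := (tvUnit i₁ i₀ hne (-e₂)).val.mulVec v₄ with hv₅def
    have hv₅ : ∀ k, v₅ k = if k = i₁ then 0 else v₄ k := by
      intro k
      rw [hv₅def, tvUnit_coe, tv_mulVec]
      rcases eq_or_ne k i₁ with h | h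
      · rw [if_pos h, if_pos h, h]
        have h41 : v₄ i₁ = e₂ := by rw [hv₄ i₁, if_neg hne, hv₃ i₁, if_pos rfl]
        have h40 : v₄ i₀ = e₁ + e₂ := by rw [hv₄ i₀, if_pos rfl]
        rw [h40, h41, neg_mul, mul_add, he₂e₁, (hu₂ : e₂ * e₂ = e₂)]
        abel
      · rw [if_neg h, if_neg h, add_zero]
    obtain ⟨P₀, e, he, hP₀⟩ := IH hT0 v₅ (by
      intro k hk hkT
      rw [hv₅ k]
      rcases eq_or_ne k i₁ with h | h
      · rw [if_pos h]
      · rw [if_neg h, hv₄ k, if_neg hk, hv₃ k, if_neg h, hv₂ k, if_neg h, hv₁ k, if_neg hk]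
        exact hv k hk (by simp [h, hkT]))
    refine ⟨P₀ * (tvUnit i₁ i₀ hne (-e₂) * (tvUnit i₀ i₁ (Ne.symm hne) (1 : S) *
      (dUnit i₁ u₂ * (tvUnit i₁ i₀ hne (-(v i₁)) * dUnit i₀ u₁)))), e, he, fun k => ?_⟩
    rw [← hP₀ k]
    have hcomp : (P₀ * (tvUnit i₁ i₀ hne (-e₂) * (tvUnit i₀ i₁ (Ne.symm hne) (1 : S) *
        (dUnit i₁ u₂ * (tvUnit i₁ i₀ hne (-(v i₁)) * dUnit i₀ u₁))))).val.mulVec v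
        = P₀.val.mulVec v₅ := by
      rw [hv₅def, hv₄def, hv₃def, hv₂def, hv₁def]
      simp only [Units.val_mul, ← Matrix.mulVec_mulVec]
    rw [hcomp]
end ColClear

section RowAbsorb
variable {S : Type*} [Ring S]

private lemma row_absorb (hred : ∀ x : S, x * x = 0 → x = 0)
    (hS : ∀ a : S, ∃ u : Sˣ, IsIdempotentElem ((u : S) * a)) {n : ℕ} :
    ∀ T : Finset (Fin n), ∀ (f : S) (s d : Fin n → S),
      IsIdempotentElem f → (∀ j, IsIdempotentElem (d j)) → (∀ j, j ∉ T → s j = 0) →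
      ∃ (P Q : (Matrix (Fin 1 ⊕ Fin n) (Fin 1 ⊕ Fin n) S)ˣ) (f' : S),
        IsIdempotentElem f' ∧
        P.val * (Matrix.fromBlocks (Matrix.of fun _ _ => f) (Matrix.of fun _ j => s j) 0
          (Matrix.diagonal d)) * Q.val
          = Matrix.diagonal (Sum.elim (fun _ => f') d) := by
  intro T
  induction T using Finset.induction_on with
  | empty =>
    intro f s d hf hd hs
    refine ⟨1, 1, f, hf, ?_⟩
    rw [Units.val_one, one_mul, mul_one]
    have h1 : (Matrix.of fun _ j => s j : Matrix (Fin 1) (Fin n) S) = 0 := by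
      ext a k; simp [hs k (Finset.notMem_empty k)]
    have h2 : (Matrix.of fun _ _ => f : Matrix (Fin 1) (Fin 1) S)
        = Matrix.diagonal (fun _ => f) := by
      ext a b
      obtain rfl : a = 0 := Subsingleton.elim _ _
      obtain rfl : b = 0 := Subsingleton.elim _ _
      simp
    rw [h1, h2, Matrix.fromBlocks_diagonal]
  | @insert j₀ T hj₀ IH =>
    intro f s d hf hd hs
    set z : Fin 1 ⊕ Fin n := Sum.inl 0 with hz
    set w : Fin 1 ⊕ Fin n := Sum.inr j₀ with hw
    have hzw : z ≠ w := by simp [hz, hw]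
    set s1 : Fin n → S := Function.update s j₀ (s j₀ - s j₀ * d j₀) with hs1
    set L₁ := tvUnit (S := S) z w hzw (-(s j₀)) with hL₁
    have hM1 : L₁.val * (Matrix.fromBlocks (Matrix.of fun _ _ => f) (Matrix.of fun _ j => s j) 0
        (Matrix.diagonal d))
        = Matrix.fromBlocks (Matrix.of fun _ _ => f) (Matrix.of fun _ j => s1 j) 0
          (Matrix.diagonal d) := by
      ext a b
      rw [hL₁, tvUnit_coe, tv_mul_apply]
      rcases a with a0 | i
      · obtain rfl : a0 = 0 := Subsingleton.elim _ _
        rw [if_pos (by rw [hz]), hw]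
        rcases b with b0 | k
        · simp
        · simp only [Matrix.fromBlocks_apply₁₂, Matrix.fromBlocks_apply₂₂, Matrix.of_apply]
          rcases eq_or_ne k j₀ with h | h
          · rw [h, Matrix.diagonal_apply_eq, hs1, Function.update_self, neg_mul]
            abel
          · rw [Matrix.diagonal_apply_ne _ (fun hc => h (hc.symm)), hs1,
              Function.update_of_ne h]
            simp
      · rw [if_neg (by simp [hz]), add_zero]
        rcases b with b0 | k <;> rfl
    set σ1 : S := s1 j₀ with hσ1
    set σ : S := σ1 - f * σ1 with hσ
    set s2 : Fin n → S := Function.update s1 j₀ σ with hs2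
    set R₁ := tvUnit (S := S) z w hzw (-σ1) with hR₁
    have hM2 : (Matrix.fromBlocks (Matrix.of fun _ _ => f) (Matrix.of fun _ j => s1 j) 0
        (Matrix.diagonal d)) * R₁.val
        = Matrix.fromBlocks (Matrix.of fun _ _ => f) (Matrix.of fun _ j => s2 j) 0
          (Matrix.diagonal d) := by
      ext a b
      rw [hR₁, tvUnit_coe, mul_tv_apply]
      rcases b with b0 | k
      · rw [if_neg (by simp [hw]), add_zero]
        rcases a with a0 | i <;> rfl
      · rcases eq_or_ne k j₀ with h | h
        · rw [h, if_pos (by rw [hw]), hz]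
          rcases a with a0 | i
          · simp only [Matrix.fromBlocks_apply₁₂, Matrix.fromBlocks_apply₁₁, Matrix.of_apply]
            rw [hs2, Function.update_self, hσ, hσ1, mul_neg]
            abel
          · simp only [Matrix.fromBlocks_apply₂₂, Matrix.fromBlocks_apply₂₁, Matrix.zero_apply]
            rw [zero_mul, add_zero]
        · rw [if_neg (by simp [hw, h]), add_zero, hs2]
          rcases a with a0 | i
          · simp only [Matrix.fromBlocks_apply₁₂, Matrix.of_apply,
              Function.update_of_ne h]
          · rfl
    -- facts about σ
    have hfσ : f * σ = 0 := by
      rw [hσ, mul_sub, ← mul_assoc, (hf : f * f = f), sub_self]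
    have hσd : σ * d j₀ = 0 := by
      have h1 : σ1 * d j₀ = 0 := by
        rw [hσ1, hs1, Function.update_self, sub_mul, mul_assoc, (hd j₀ : d j₀ * d j₀ = d j₀),
          sub_self]
      rw [hσ, sub_mul, mul_assoc, h1, mul_zero, sub_zero]
    obtain ⟨w₂, hw₂⟩ := hS σ
    set e : S := (w₂ : S) * σ with he
    have hσe : σ = (↑w₂⁻¹ : S) * e := by rw [he, ← mul_assoc]; simp
    have hecen : ∀ y, e * y = y * e := idem_central hred hw₂
    have hfcen : ∀ y, f * y = y * f := idem_central hred hf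
    have hed : e * d j₀ = 0 := by rw [he, mul_assoc, hσd, mul_zero]
    have hde : d j₀ * e = 0 := by rw [← hecen, hed]
    have hσf : σ * f = 0 := by rw [← hfcen, hfσ]
    have hef : e * f = 0 := by rw [he, mul_assoc, hσf, mul_zero]
    have hfe : f * e = 0 := by rw [hfcen, hef]
    set R₂ := tvUnit (S := S) w z (Ne.symm hzw) (e * (w₂ : S)) with hR₂
    have hM3 : (Matrix.fromBlocks (Matrix.of fun _ _ => f) (Matrix.of fun _ j => s2 j) 0
        (Matrix.diagonal d)) * R₂.val
        = Matrix.fromBlocks (Matrix.of fun _ _ => f + e) (Matrix.of fun _ j => s2 j) 0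
          (Matrix.diagonal d) := by
      ext a b
      rw [hR₂, tvUnit_coe, mul_tv_apply]
      rcases b with b0 | k
      · obtain rfl : b0 = 0 := Subsingleton.elim _ _
        rw [if_pos (by rw [hz]), hw]
        rcases a with a0 | i
        · simp only [Matrix.fromBlocks_apply₁₁, Matrix.fromBlocks_apply₁₂, Matrix.of_apply]
          have hval : s2 j₀ = σ := by rw [hs2, Function.update_self]
          rw [hval, hσe, ← mul_assoc, mul_assoc ((↑w₂⁻¹ : S)) e e, (hw₂ : e * e = e),
            mul_assoc, hecen (w₂ : S), ← mul_assoc]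
          simp
        · simp only [Matrix.fromBlocks_apply₂₁, Matrix.fromBlocks_apply₂₂, Matrix.zero_apply]
          rcases eq_or_ne i j₀ with h | h
          · rw [h, Matrix.diagonal_apply_eq, ← mul_assoc, hde, zero_mul, add_zero]
          · rw [Matrix.diagonal_apply_ne _ h]
            simp
      · rw [if_neg (by simp [hz]), add_zero]
        rcases a with a0 | i <;> rfl
    set s3 : Fin n → S := Function.update s2 j₀ 0 with hs3
    set R₃ := tvUnit (S := S) z w hzw (-((↑w₂⁻¹ : S) * e)) with hR₃
    have hM4 : (Matrix.fromBlocks (Matrix.of fun _ _ => f + e) (Matrix.of fun _ j => s2 j) 0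
        (Matrix.diagonal d)) * R₃.val
        = Matrix.fromBlocks (Matrix.of fun _ _ => f + e) (Matrix.of fun _ j => s3 j) 0
          (Matrix.diagonal d) := by
      ext a b
      rw [hR₃, tvUnit_coe, mul_tv_apply]
      rcases b with b0 | k
      · rw [if_neg (by simp [hw]), add_zero]
        rcases a with a0 | i <;> rfl
      · rcases eq_or_ne k j₀ with h | h
        · rw [h, if_pos (by rw [hw]), hz]
          rcases a with a0 | i
          · simp only [Matrix.fromBlocks_apply₁₂, Matrix.fromBlocks_apply₁₁, Matrix.of_apply]
            have hval : s2 j₀ = σ := by rw [hs2, Function.update_self]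
            rw [hval, hs3, Function.update_self, mul_neg, add_mul]
            have h1 : f * ((↑w₂⁻¹ : S) * e) = 0 := by
              rw [← mul_assoc, hfcen (↑w₂⁻¹ : S), mul_assoc, hfe, mul_zero]
            have h2 : e * ((↑w₂⁻¹ : S) * e) = (↑w₂⁻¹ : S) * e := by
              rw [← mul_assoc, hecen (↑w₂⁻¹ : S), mul_assoc, (hw₂ : e * e = e)]
            rw [h1, h2, zero_add, ← hσe]
            simp
          · simp only [Matrix.fromBlocks_apply₂₂, Matrix.fromBlocks_apply₂₁, Matrix.zero_apply]
            rw [zero_mul, add_zero]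
        · rw [if_neg (by simp [hw, h]), add_zero, hs3]
          rcases a with a0 | i
          · simp only [Matrix.fromBlocks_apply₁₂, Matrix.of_apply,
              Function.update_of_ne h]
          · rfl
    have hface : IsIdempotentElem (f + e) := by
      unfold IsIdempotentElem
      rw [add_mul, mul_add, mul_add, (hf : f * f = f), (hw₂ : e * e = e), hef, hfe]
      abel
    obtain ⟨P', Q', f'', hf'', hPQ⟩ := IH (f + e) s3 d hface hd (by
      intro k hk
      rcases eq_or_ne k j₀ with h | h
      · rw [h, hs3, Function.update_self]
      · rw [hs3, Function.update_of_ne h, hs2, Function.update_of_ne h, hs1,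
          Function.update_of_ne h]
        exact hs k (by simp [h, hk]))
    refine ⟨P' * L₁, R₁ * (R₂ * (R₃ * Q')), f'', hf'', ?_⟩
    have hassoc : (P' * L₁).val * (Matrix.fromBlocks (Matrix.of fun _ _ => f)
        (Matrix.of fun _ j => s j) 0 (Matrix.diagonal d)) * (R₁ * (R₂ * (R₃ * Q'))).val
        = P'.val * ((((L₁.val * (Matrix.fromBlocks (Matrix.of fun _ _ => f)
        (Matrix.of fun _ j => s j) 0 (Matrix.diagonal d))) * R₁.val) * R₂.val) * R₃.val)
          * Q'.val := by
      simp only [Units.val_mul, mul_assoc]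
    rw [hassoc, hM1, hM2, hM3, hM4, hPQ]
end RowAbsorb

section DiagProp
variable (S : Type*) [Ring S]

private def DiagProp (ι : Type*) [Fintype ι] [DecidableEq ι] : Prop :=
  ∀ A : Matrix ι ι S, ∃ (P Q : (Matrix ι ι S)ˣ) (d : ι → S),
    (∀ i, IsIdempotentElem (d i)) ∧ P.val * A * Q.val = Matrix.diagonal d

variable {S}

private lemma diagProp_transport {κ ι : Type*} [Fintype κ] [DecidableEq κ] [Fintype ι]
    [DecidableEq ι] (e : κ ≃ ι) (h : DiagProp S κ) : DiagProp S ι := by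
  intro A
  obtain ⟨P, Q, d, hd, hPQ⟩ := h (A.submatrix e e)
  refine ⟨⟨P.val.submatrix e.symm e.symm, (P⁻¹).val.submatrix e.symm e.symm, ?_, ?_⟩,
          ⟨Q.val.submatrix e.symm e.symm, (Q⁻¹).val.submatrix e.symm e.symm, ?_, ?_⟩,
          d ∘ e.symm, fun i => hd _, ?_⟩
  · rw [Matrix.submatrix_mul_equiv, P.mul_inv, Matrix.submatrix_one_equiv]
  · rw [Matrix.submatrix_mul_equiv, P.inv_mul, Matrix.submatrix_one_equiv]
  · rw [Matrix.submatrix_mul_equiv, Q.mul_inv, Matrix.submatrix_one_equiv]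
  · rw [Matrix.submatrix_mul_equiv, Q.inv_mul, Matrix.submatrix_one_equiv]
  · have hA : A = (A.submatrix e e).submatrix e.symm e.symm := by
      rw [Matrix.submatrix_submatrix, Equiv.self_comp_symm, Matrix.submatrix_id_id]
    dsimp only
    rw [hA, Matrix.submatrix_mul_equiv, Matrix.submatrix_mul_equiv, hPQ,
      Matrix.submatrix_diagonal_equiv]

private lemma fromBlocks_unit_aux {n : ℕ} {P Q : Matrix (Fin n) (Fin n) S} (h : P * Q = 1) :
    Matrix.fromBlocks (1 : Matrix (Fin 1) (Fin 1) S) 0 0 P *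
      Matrix.fromBlocks (1 : Matrix (Fin 1) (Fin 1) S) 0 0 Q = 1 := by
  rw [Matrix.fromBlocks_multiply]
  simp only [Matrix.mul_zero, Matrix.zero_mul, Matrix.one_mul, Matrix.mul_one,
    add_zero, zero_add, h]
  exact Matrix.fromBlocks_one

private def blockUnit {n : ℕ} (P : (Matrix (Fin n) (Fin n) S)ˣ) :
    (Matrix (Fin 1 ⊕ Fin n) (Fin 1 ⊕ Fin n) S)ˣ :=
  ⟨Matrix.fromBlocks 1 0 0 P.val, Matrix.fromBlocks 1 0 0 (P⁻¹).val,
   fromBlocks_unit_aux (P.mul_inv),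
   fromBlocks_unit_aux (P.inv_mul)⟩

private lemma blockUnit_val {n : ℕ} (P : (Matrix (Fin n) (Fin n) S)ˣ) :
    (blockUnit P).val = Matrix.fromBlocks 1 0 0 P.val := rfl

private lemma diagProp_fin (hred : ∀ x : S, x * x = 0 → x = 0)
    (hS : ∀ a : S, ∃ u : Sˣ, IsIdempotentElem ((u : S) * a)) :
    ∀ n : ℕ, DiagProp S (Fin n) := by
  intro n
  induction n with
  | zero =>
    intro A
    refine ⟨1, 1, fun i => 0, fun i => i.elim0, ?_⟩
    ext i j
    exact i.elim0
  | succ n IH =>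
    apply diagProp_transport (κ := Fin 1 ⊕ Fin n)
      (finSumFinEquiv.trans (finCongr (by omega)))
    intro A
    set z : Fin 1 ⊕ Fin n := Sum.inl 0 with hz
    obtain ⟨P₁, f, hf, hcol⟩ := col_clear hred hS z (Finset.univ.erase z)
      (by simp) (fun i => A i z)
      (fun i hi hiT => (hiT (Finset.mem_erase.2 ⟨hi, Finset.mem_univ i⟩)).elim)
    have hcol' : ∀ i, (P₁.val * A) i z = if i = z then f else 0 := by
      intro i
      rw [← hcol i]
      rw [Matrix.mul_apply, Matrix.mulVec, dotProduct]
    set B : Matrix (Fin n) (Fin n) S :=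
      Matrix.of (fun i j => (P₁.val * A) (Sum.inr i) (Sum.inr j)) with hB
    obtain ⟨P', Q', d, hd, hPQ⟩ := IH B
    have hblock : P₁.val * A = Matrix.fromBlocks (Matrix.of fun _ _ => f)
        (Matrix.of fun _ j => (P₁.val * A) z (Sum.inr j)) 0 B := by
      ext a b
      rcases a with a0 | i
      · obtain rfl : a0 = 0 := Subsingleton.elim _ _
        rcases b with b0 | k
        · obtain rfl : b0 = 0 := Subsingleton.elim _ _
          rw [Matrix.fromBlocks_apply₁₁, Matrix.of_apply]
          have := hcol' z
          rw [if_pos rfl] at this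
          exact this
        · rfl
      · rcases b with b0 | k
        · obtain rfl : b0 = 0 := Subsingleton.elim _ _
          rw [Matrix.fromBlocks_apply₂₁, Matrix.zero_apply]
          have := hcol' (Sum.inr i)
          rw [if_neg (by simp [hz])] at this
          exact this
        · rfl
    set s : Fin n → S :=
      fun j => ((Matrix.of fun (_ : Fin 1) j => (P₁.val * A) z (Sum.inr j)) * Q'.val) 0 j
      with hs
    have hof : (Matrix.of fun (_ : Fin 1) j => (P₁.val * A) z (Sum.inr j)) * Q'.val
        = Matrix.of fun _ j => s j := by
      ext a k
      obtain rfl : a = 0 := Subsingleton.elim _ _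
      rw [hs]
      rfl
    have hmid : (blockUnit P').val * (P₁.val * A) * (blockUnit Q').val
        = Matrix.fromBlocks (Matrix.of fun _ _ => f) (Matrix.of fun _ j => s j) 0
          (Matrix.diagonal d) := by
      rw [hblock, blockUnit_val, blockUnit_val, Matrix.fromBlocks_multiply,
        Matrix.fromBlocks_multiply]
      simp only [Matrix.mul_zero, Matrix.zero_mul, Matrix.one_mul, Matrix.mul_one,
        add_zero, zero_add]
      rw [hof, hPQ]
    obtain ⟨P₃, Q₃, f', hf', heq⟩ := row_absorb hred hS Finset.univ f s d hf hd
      (fun j hj => (hj (Finset.mem_univ j)).elim)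
    refine ⟨P₃ * (blockUnit P' * P₁), blockUnit Q' * Q₃,
      Sum.elim (fun _ => f') d, ?_, ?_⟩
    · intro i
      rcases i with i0 | k
      · exact hf'
      · exact hd k
    · have hassoc : (P₃ * (blockUnit P' * P₁)).val * A * (blockUnit Q' * Q₃).val
          = P₃.val * ((blockUnit P').val * (P₁.val * A) * (blockUnit Q').val) * Q₃.val := by
        simp only [Units.val_mul, mul_assoc]
      rw [hassoc, hmid, heq]
end DiagProp

theorem matrix_stronglyUnitNilClean_of_weakly2Primal
    (R : Type*) [Ring R] (h2p : Weakly2Primal R) (hR : StronglyUnitNilClean R)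
    (n : ℕ) (hn : 1 ≤ n) :
    StronglyUnitNilClean (Matrix (Fin n) (Fin n) R) := by
  classical
  obtain ⟨⟨I, hI⟩, hLN⟩ := h2p
  set π : R →+* I.ringCon.Quotient := RingCon.mk' I.ringCon with hπ
  have hπsurj : Function.Surjective π := fun y => Quotient.inductionOn' y fun x => ⟨x, rfl⟩
  have hker : ∀ x : R, π x = 0 ↔ IsNilpotent x := by
    intro x
    have h1 : π x = π 0 ↔ I.ringCon x 0 := RingCon.eq _
    rw [show (0 : I.ringCon.Quotient) = π 0 from (map_zero π).symm, h1,
      ← TwoSidedIdeal.mem_iff, hI]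
  have hred : ∀ y : I.ringCon.Quotient, y * y = 0 → y = 0 := by
    intro y hy
    obtain ⟨x, rfl⟩ := hπsurj y
    rw [← map_mul, hker] at hy
    rw [hker]
    obtain ⟨k, hk⟩ := hy
    exact ⟨2 * k, by rw [pow_mul]; rw [← hk]; rw [sq]⟩
  have hSuc : ∀ y : I.ringCon.Quotient, ∃ u : (I.ringCon.Quotient)ˣ,
      IsIdempotentElem ((u : I.ringCon.Quotient) * y) := by
    intro y
    obtain ⟨x, rfl⟩ := hπsurj y
    obtain ⟨u, e, b, he, hb, hcomm, heq⟩ := hR x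
    refine ⟨Units.map π.toMonoidHom u, ?_⟩
    have hz : ((Units.map π.toMonoidHom u : (I.ringCon.Quotient)ˣ) : I.ringCon.Quotient) * π x
        = π e := by
      show π ↑u * π x = π e
      rw [← map_mul, heq, map_add, (hker b).2 hb, add_zero]
    show IsIdempotentElem _
    rw [hz]
    show π e * π e = π e
    rw [← map_mul, (he : e * e = e)]
  -- matrix level
  set φ : Matrix (Fin n) (Fin n) R →+* Matrix (Fin n) (Fin n) I.ringCon.Quotient
    := π.mapMatrix with hφ
  have hφapp : ∀ (A : Matrix (Fin n) (Fin n) R) i j, φ A i j = π (A i j) := by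
    intro A i j; rfl
  have hφsurj : Function.Surjective φ := by
    intro C
    refine ⟨Matrix.of fun i j => (hπsurj (C i j)).choose, ?_⟩
    ext i j
    rw [hφapp]
    exact (hπsurj (C i j)).choose_spec
  have hφker : ∀ A, φ A = 0 → IsNilpotent A := by
    intro A hA
    apply matrix_nilpotent hLN
    intro i j
    rw [← hker (A i j), ← hφapp, hA]
    rfl
  intro X
  obtain ⟨P, Q, d, hd, hPQ⟩ := diagProp_fin hred hSuc n (φ X)
  have hD : Matrix.diagonal d * Matrix.diagonal d = Matrix.diagonal d := by
    rw [Matrix.diagonal_mul_diagonal]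
    exact congrArg Matrix.diagonal (funext fun i => hd i)
  have h1 : P.val * φ X = Matrix.diagonal d * (Q⁻¹).val := by
    calc P.val * φ X = P.val * φ X * (Q.val * (Q⁻¹).val) := by rw [Q.mul_inv, mul_one]
      _ = (P.val * φ X * Q.val) * (Q⁻¹).val := by simp only [mul_assoc]
      _ = Matrix.diagonal d * (Q⁻¹).val := by rw [hPQ]
  have hE : (Q * P).val * φ X = Q.val * (Matrix.diagonal d * (Q⁻¹).val) := by
    rw [Units.val_mul, mul_assoc, h1]
  have hEidem : ((Q * P).val * φ X) * ((Q * P).val * φ X) = (Q * P).val * φ X := by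
    rw [hE]
    calc Q.val * (Matrix.diagonal d * (Q⁻¹).val) * (Q.val * (Matrix.diagonal d * (Q⁻¹).val))
        = Q.val * (Matrix.diagonal d * (((Q⁻¹).val * Q.val) * (Matrix.diagonal d * (Q⁻¹).val)))
          := by simp only [mul_assoc]
      _ = Q.val * (Matrix.diagonal d * (Matrix.diagonal d * (Q⁻¹).val)) := by
          rw [Q.inv_mul, one_mul]
      _ = Q.val * ((Matrix.diagonal d * Matrix.diagonal d) * (Q⁻¹).val) := by
          rw [mul_assoc]
      _ = Q.val * (Matrix.diagonal d * (Q⁻¹).val) := by rw [hD]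
  obtain ⟨U, hU⟩ := unit_lift φ hφsurj hφker (Q * P)
  refine ⟨U, ?_⟩
  have hnil : IsNilpotent ((U.val * X) - (U.val * X) ^ 2) := by
    apply hφker
    rw [map_sub, map_pow, map_mul, hU, sq, hEidem, sub_self]
  obtain ⟨e, b, he, hb, hcomm, heq⟩ := isStronglyNilClean_of_nilpotent hnil
  exact ⟨e, b, he, hb, hcomm, heq⟩
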